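/- arXiv:1311.5769 — 2 statements merged into one kernel-verified Lean document; each statement's English description precedes it below -/
import Mathlib

section
/- Let a, b, c be elements of a commutative ring and n ≥ 2 a natural number. Then P_{n,0}, the total weight of all step sequences of length n−1 which, started at height 1, have height ≥ 1 after each of the first n−2 steps and height 0 after the final step, equals ∑_{i=0}^{⌊(n−2)/2⌋} C(n−2, 2i)·Cat(i)·a^{i}·b^{n−2−2i}·c^{i+1}, where Cat(i) = C(2i, i) − C(2i, i−1) is the i-th Catalan number. -/
open Finset

/-- The step sequences of length `L`: functions `Fin L → ℤ` with every value in `{1, 0, -1}`. -/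
def stepSeqs (L : ℕ) : Finset (Fin L → ℤ) :=
  Fintype.piFinset fun _ => ({1, 0, -1} : Finset ℤ)

/-- The weight of a step sequence: `a ^ (#up steps) * b ^ (#flat steps) * c ^ (#down steps)`. -/
def seqWeight {R : Type*} [CommRing R] (a b c : R) {L : ℕ} (s : Fin L → ℤ) : R :=
  a ^ (Finset.univ.filter (fun i => s i = 1)).card *
    b ^ (Finset.univ.filter (fun i => s i = 0)).card *
      c ^ (Finset.univ.filter (fun i => s i = -1)).card

/-- The height of a step sequence after `i` steps, started at height `h`. -/
def seqHeight {L : ℕ} (h : ℤ) (s : Fin L → ℤ) (i : ℕ) : ℤ :=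
  h + ∑ j ∈ Finset.univ.filter (fun j : Fin L => (j : ℕ) < i), s j

/-- integer coefficient -/
def mcoeff (m k i : ℕ) : ℤ :=
  if k ≤ 2*i then
    (Nat.choose m (2*i - k)) * ((Nat.choose (2*i - k) i : ℤ) - Nat.choose (2*i - k) (i+1))
  else 0

lemma mcoeff_eq_zero_left {k i : ℕ} (m : ℕ) (h : i < k) : mcoeff m k i = 0 := by
  unfold mcoeff
  split_ifs with hg
  · rw [Nat.choose_eq_zero_of_lt (show 2*i - k < i by omega),
      Nat.choose_eq_zero_of_lt (show 2*i - k < i+1 by omega)]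
    ring
  · rfl

lemma mcoeff_eq_zero_right {m k i : ℕ} (h : m + k < 2*i) : mcoeff m k i = 0 := by
  unfold mcoeff
  split_ifs with hg
  · rw [Nat.choose_eq_zero_of_lt (show m < 2*i - k by omega)]
    push_cast; ring
  · rfl

lemma mcoeff_succ (m k i : ℕ) :
    mcoeff (m+1) k i =
      (if 1 ≤ k ∧ 1 ≤ i then mcoeff m (k-1) (i-1) else 0) + mcoeff m k i + mcoeff m (k+1) i := by
  by_cases hki : k ≤ i
  · by_cases hr : 2*i ≤ m + 1 + k
    · -- real case
      rcases Nat.eq_zero_or_pos i with hi0 | hi1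
      · subst hi0
        have hk0 : k = 0 := by omega
        subst hk0
        simp [mcoeff]
      · obtain ⟨i', rfl⟩ : ∃ i', i = i' + 1 := ⟨i - 1, by omega⟩
        rcases Nat.eq_zero_or_pos k with hk0 | hk1
        · subst hk0
          -- case k = 0
          rw [show (if 1 ≤ 0 ∧ 1 ≤ i'+1 then mcoeff m (0-1) (i'+1-1) else 0) = 0 by norm_num]
          unfold mcoeff
          rw [if_pos (show 0 ≤ 2*(i'+1) by omega), if_pos (show 0 ≤ 2*(i'+1) by omega),
            if_pos (show 0+1 ≤ 2*(i'+1) by omega)]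
          rw [show 2*(i'+1) - 0 = (2*i'+1)+1 by omega, show 2*(i'+1) - (0+1) = 2*i'+1 by omega]
          have hs : ((2*i'+1).choose (i'+1) : ℤ) = (2*i'+1).choose i' := by
            exact_mod_cast Nat.choose_symm_half i'
          simp only [Nat.choose_succ_succ]
          push_cast
          simp only [Nat.choose_succ_succ] at hs
          push_cast at hs
          linear_combination (-1 : ℤ) * (m.choose (2*i'+1) : ℤ) * hs
        · obtain ⟨k', rfl⟩ : ∃ k', k = k' + 1 := ⟨k - 1, by omega⟩
          obtain ⟨n', hn'⟩ : ∃ n', 2*(i'+1) - (k'+1) = n' + 1 :=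
            ⟨2*(i'+1) - (k'+1) - 1, by omega⟩
          rw [if_pos (show 1 ≤ k'+1 ∧ 1 ≤ i'+1 by omega)]
          unfold mcoeff
          rw [if_pos (show k'+1 ≤ 2*(i'+1) by omega),
            if_pos (show k'+1-1 ≤ 2*(i'+1-1) by omega),
            if_pos (show k'+1 ≤ 2*(i'+1) by omega),
            if_pos (show k'+1+1 ≤ 2*(i'+1) by omega)]
          rw [hn', show 2*(i'+1-1) - (k'+1-1) = n' by omega,
            show 2*(i'+1) - (k'+1+1) = n' by omega,
            show i'+1-1 = i' by omega]
          simp only [Nat.choose_succ_succ]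
          push_cast
          ring
    · -- all zero on the right side of region
      have e1 : mcoeff (m+1) k i = 0 := mcoeff_eq_zero_right (by omega)
      have e2 : mcoeff m k i = 0 := mcoeff_eq_zero_right (by omega)
      have e3 : mcoeff m (k+1) i = 0 := mcoeff_eq_zero_right (by omega)
      rw [e1, e2, e3]
      rcases Nat.eq_zero_or_pos k with hk0 | hk1
      · subst hk0; norm_num
      · have e4 : mcoeff m (k-1) (i-1) = 0 := mcoeff_eq_zero_right (by omega)
        rw [if_pos ⟨hk1, by omega⟩, e4]; norm_num
  · -- k > i
    have e1 : mcoeff (m+1) k i = 0 := mcoeff_eq_zero_left _ (by omega)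
    have e2 : mcoeff m k i = 0 := mcoeff_eq_zero_left _ (by omega)
    have e3 : mcoeff m (k+1) i = 0 := mcoeff_eq_zero_left _ (by omega)
    rw [e1, e2, e3]
    rcases Nat.eq_zero_or_pos i with hi0 | hi1
    · subst hi0
      rw [if_neg (by omega)]; norm_num
    · have e4 : mcoeff m (k-1) (i-1) = 0 := mcoeff_eq_zero_left _ (by omega)
      rw [if_pos ⟨by omega, hi1⟩, e4]; norm_num

open Finset




lemma seqHeight_snoc_le {m : ℕ} (h : ℤ) (t : Fin m → ℤ) (v : ℤ) {i : ℕ} (hi : i ≤ m) :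
    seqHeight h (Fin.snoc t v) i = seqHeight h t i := by
  unfold seqHeight
  rw [Finset.sum_filter, Finset.sum_filter, Fin.sum_univ_castSucc]
  simp only [Fin.snoc_castSucc, Fin.snoc_last, Fin.coe_castSucc, Fin.val_last]
  rw [if_neg (by omega)]
  ring

lemma seqHeight_snoc_last {m : ℕ} (h : ℤ) (t : Fin m → ℤ) (v : ℤ) :
    seqHeight h (Fin.snoc t v) (m+1) = seqHeight h t m + v := by
  unfold seqHeight
  rw [Finset.sum_filter, Finset.sum_filter, Fin.sum_univ_castSucc]
  simp only [Fin.snoc_castSucc, Fin.snoc_last, Fin.coe_castSucc, Fin.val_last]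
  rw [if_pos (by omega)]
  have : ∀ j : Fin m, (if (j:ℕ) < m + 1 then t j else 0) = (if (j:ℕ) < m then t j else 0) := by
    intro j; rw [if_pos (by omega), if_pos j.isLt]
  rw [Finset.sum_congr rfl (fun j _ => this j)]
  ring

lemma card_filter_snoc {m : ℕ} (t : Fin m → ℤ) (v x : ℤ) :
    (Finset.univ.filter (fun i : Fin (m+1) => (Fin.snoc t v : Fin (m+1) → ℤ) i = x)).card
      = (Finset.univ.filter (fun i : Fin m => t i = x)).card + if v = x then 1 else 0 := by
  rw [Finset.card_filter, Finset.card_filter, Fin.sum_univ_castSucc]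
  simp only [Fin.snoc_castSucc, Fin.snoc_last]

lemma seqWeight_snoc {R : Type*} [CommRing R] (a b c : R) {m : ℕ} (t : Fin m → ℤ) (v : ℤ)
    (hv : v = 1 ∨ v = 0 ∨ v = -1) :
    seqWeight a b c (Fin.snoc t v) = seqWeight a b c t *
      (if v = 1 then a else if v = 0 then b else c) := by
  unfold seqWeight
  rw [card_filter_snoc, card_filter_snoc, card_filter_snoc]
  rcases hv with h | h | h
  · subst h; norm_num [pow_succ]; ring
  · subst h; norm_num [pow_succ]; ring
  · subst h; norm_num [pow_succ]; ring

lemma sum_stepSeqs_succ {R : Type*} [AddCommMonoid R] {m : ℕ} (f : (Fin (m+1) → ℤ) → R) :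
    ∑ s ∈ stepSeqs (m+1), f s
      = ∑ t ∈ stepSeqs m, (f (Fin.snoc t 1) + f (Fin.snoc t 0) + f (Fin.snoc t (-1))) := by
  have key : ∑ s ∈ stepSeqs (m+1), f s
      = ∑ p ∈ (stepSeqs m) ×ˢ ({1, 0, -1} : Finset ℤ), f (Fin.snoc p.1 p.2) := by
    refine Finset.sum_nbij' (fun s => (Fin.init s, s (Fin.last m))) (fun p => Fin.snoc p.1 p.2)
      ?_ ?_ ?_ ?_ ?_
    · intro s hs
      rw [Finset.mem_product]
      simp only [stepSeqs, Fintype.mem_piFinset] at hs ⊢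
      exact ⟨fun i => hs _, hs _⟩
    · intro p hp
      rw [Finset.mem_product] at hp
      simp only [stepSeqs, Fintype.mem_piFinset] at hp ⊢
      intro i
      induction i using Fin.lastCases with
      | last => rw [Fin.snoc_last]; exact hp.2
      | cast j => rw [Fin.snoc_castSucc]; exact hp.1 j
    · intro s _; exact Fin.snoc_init_self s
    · intro p _; simp [Fin.init_snoc]
    · intro s _; rw [Fin.snoc_init_self]
  rw [key, Finset.sum_product]
  apply Finset.sum_congr rfl
  intro t _
  rw [show ({1, 0, -1} : Finset ℤ) = insert 1 (insert 0 {-1}) from rfl,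
    Finset.sum_insert (by decide), Finset.sum_insert (by decide), Finset.sum_singleton, add_assoc]

def pathsW {R : Type*} [CommRing R] (a b c : R) (m k : ℕ) : R :=
  ∑ s ∈ (stepSeqs m).filter
      (fun s => (∀ i ≤ m, 0 ≤ seqHeight 0 s i) ∧ seqHeight 0 s m = (k : ℤ)),
    seqWeight a b c s

lemma cond_snoc {m : ℕ} (t : Fin m → ℤ) (v : ℤ) {K : ℤ} (hK : 0 ≤ K) :
    ((∀ i ≤ m+1, 0 ≤ seqHeight 0 (Fin.snoc t v) i) ∧ seqHeight 0 (Fin.snoc t v) (m+1) = K)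
      ↔ ((∀ i ≤ m, 0 ≤ seqHeight 0 t i) ∧ seqHeight 0 t m = K - v) := by
  constructor
  · rintro ⟨h1, h2⟩
    rw [seqHeight_snoc_last] at h2
    refine ⟨fun i hi => ?_, by omega⟩
    have := h1 i (by omega)
    rwa [seqHeight_snoc_le _ _ _ hi] at this
  · rintro ⟨h1, h2⟩
    constructor
    · intro i hi
      rcases Nat.lt_or_ge i (m+1) with h | h
      · rw [seqHeight_snoc_le _ _ _ (by omega)]; exact h1 i (by omega)
      · have : i = m + 1 := by omega
        subst this
        rw [seqHeight_snoc_last]; omega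
    · rw [seqHeight_snoc_last]; omega

lemma pathsW_succ {R : Type*} [CommRing R] (a b c : R) (m k : ℕ) :
    pathsW a b c (m+1) k = b * pathsW a b c m k + c * pathsW a b c m (k+1)
      + (if k = 0 then 0 else a * pathsW a b c m (k-1)) := by
  have hK : (0:ℤ) ≤ (k:ℤ) := Int.natCast_nonneg k
  have collect : ∀ (x : R) (K : ℤ),
      (∑ t ∈ stepSeqs m, if ((∀ i ≤ m, 0 ≤ seqHeight 0 t i) ∧ seqHeight 0 t m = K)
        then seqWeight a b c t * x else 0)
      = x * ∑ t ∈ (stepSeqs m).filter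
          (fun t => (∀ i ≤ m, 0 ≤ seqHeight 0 t i) ∧ seqHeight 0 t m = K),
          seqWeight a b c t := by
    intro x K
    rw [Finset.mul_sum, Finset.sum_filter]
    exact Finset.sum_congr rfl (fun t _ => by split_ifs <;> ring)
  have step1 : ∀ t : Fin m → ℤ,
      (if (∀ i ≤ m+1, 0 ≤ seqHeight 0 (Fin.snoc t (1:ℤ)) i)
          ∧ seqHeight 0 (Fin.snoc t (1:ℤ)) (m+1) = (k:ℤ)
        then seqWeight a b c (Fin.snoc t (1:ℤ)) else 0)
      = (if ((∀ i ≤ m, 0 ≤ seqHeight 0 t i) ∧ seqHeight 0 t m = (k:ℤ) - 1)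
        then seqWeight a b c t * a else 0) := by
    intro t
    rw [if_congr (cond_snoc t 1 hK) (seqWeight_snoc a b c t 1 (by norm_num)) rfl]
    norm_num
  have step0 : ∀ t : Fin m → ℤ,
      (if (∀ i ≤ m+1, 0 ≤ seqHeight 0 (Fin.snoc t (0:ℤ)) i)
          ∧ seqHeight 0 (Fin.snoc t (0:ℤ)) (m+1) = (k:ℤ)
        then seqWeight a b c (Fin.snoc t (0:ℤ)) else 0)
      = (if ((∀ i ≤ m, 0 ≤ seqHeight 0 t i) ∧ seqHeight 0 t m = (k:ℤ))
        then seqWeight a b c t * b else 0) := by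
    intro t
    rw [if_congr (cond_snoc t 0 hK) (seqWeight_snoc a b c t 0 (by norm_num)) rfl]
    norm_num
  have stepm1 : ∀ t : Fin m → ℤ,
      (if (∀ i ≤ m+1, 0 ≤ seqHeight 0 (Fin.snoc t (-1:ℤ)) i)
          ∧ seqHeight 0 (Fin.snoc t (-1:ℤ)) (m+1) = (k:ℤ)
        then seqWeight a b c (Fin.snoc t (-1:ℤ)) else 0)
      = (if ((∀ i ≤ m, 0 ≤ seqHeight 0 t i) ∧ seqHeight 0 t m = (k:ℤ) + 1)
        then seqWeight a b c t * c else 0) := by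
    intro t
    rw [if_congr (cond_snoc t (-1) hK) (seqWeight_snoc a b c t (-1) (by norm_num)) rfl]
    norm_num
  conv_lhs => rw [pathsW, Finset.sum_filter, sum_stepSeqs_succ]
  simp only [step1, step0, stepm1]
  rw [Finset.sum_add_distrib, Finset.sum_add_distrib, collect a ((k:ℤ)-1), collect b (k:ℤ),
    collect c ((k:ℤ)+1)]
  have hc : c * (∑ t ∈ (stepSeqs m).filter
      (fun t => (∀ i ≤ m, 0 ≤ seqHeight 0 t i) ∧ seqHeight 0 t m = (k:ℤ)+1),
      seqWeight a b c t) = c * pathsW a b c m (k+1) := by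
    rw [pathsW]
    congr 2
  rw [hc]
  by_cases hk : k = 0
  · subst hk
    rw [if_pos rfl]
    have ha : (∑ t ∈ (stepSeqs m).filter
        (fun t => (∀ i ≤ m, 0 ≤ seqHeight 0 t i) ∧ seqHeight 0 t m = ((0:ℕ):ℤ)-1),
        seqWeight a b c t) = 0 := by
      rw [Finset.filter_false_of_mem, Finset.sum_empty]
      rintro t _ ⟨h1, h2⟩
      have := h1 m le_rfl
      omega
    rw [ha]
    simp only [pathsW]
    ring
  · rw [if_neg hk]
    have ha : a * (∑ t ∈ (stepSeqs m).filter
        (fun t => (∀ i ≤ m, 0 ≤ seqHeight 0 t i) ∧ seqHeight 0 t m = (k:ℤ)-1),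
        seqWeight a b c t) = a * pathsW a b c m (k-1) := by
      rw [pathsW]
      congr 2
      apply Finset.filter_congr
      intro t _
      constructor
      · rintro ⟨h1, h2⟩; refine ⟨h1, ?_⟩
        have : ((k-1:ℕ):ℤ) = (k:ℤ)-1 := by omega
        omega
      · rintro ⟨h1, h2⟩; refine ⟨h1, ?_⟩
        have : ((k-1:ℕ):ℤ) = (k:ℤ)-1 := by omega
        omega
    rw [ha, show (∑ t ∈ (stepSeqs m).filter
        (fun t => (∀ i ≤ m, 0 ≤ seqHeight 0 t i) ∧ seqHeight 0 t m = (k:ℤ)),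
        seqWeight a b c t) = pathsW a b c m k from rfl]
    ring

lemma mcoeff_zero_of_big {m k i : ℕ} (h : m < i) : mcoeff m k i = 0 := by
  rcases Nat.lt_or_ge i k with h1 | h1
  · exact mcoeff_eq_zero_left m h1
  · exact mcoeff_eq_zero_right (by omega)

def wterm {R : Type*} [CommRing R] (a b c : R) (m k i : ℕ) : R :=
  (mcoeff m k i : R) * a^i * b^(m + k - 2*i) * c^(i - k)

lemma seqHeight_shift {L : ℕ} (s : Fin L → ℤ) (i : ℕ) :
    seqHeight 1 s i = 1 + seqHeight 0 s i := by
  unfold seqHeight; ring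

lemma pathsW_eq {R : Type*} [CommRing R] (a b c : R) (m k : ℕ) :
    pathsW a b c m k = ∑ i ∈ Finset.range (m+1), wterm a b c m k i := by
  induction m generalizing k with
  | zero =>
    rw [Finset.sum_range_one]
    have hH : ∀ s : Fin 0 → ℤ, ∀ j : ℕ, seqHeight 0 s j = 0 := by
      intro s j; unfold seqHeight; simp
    unfold pathsW wterm
    by_cases hk : k = 0
    · subst hk
      rw [Finset.filter_true_of_mem (fun s _ => ⟨fun i _ => by rw [hH], by rw [hH]; norm_num⟩)]
      have hw : ∀ s : Fin 0 → ℤ, seqWeight a b c s = 1 := by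
        intro s; unfold seqWeight; simp
      rw [Finset.sum_congr rfl (fun s _ => hw s), Finset.sum_const]
      have hcard : (stepSeqs 0).card = 1 := by
        simp [stepSeqs]
      rw [hcard, one_smul]
      simp [mcoeff]
    · rw [Finset.filter_false_of_mem, Finset.sum_empty]
      · rw [show mcoeff 0 k 0 = 0 from by unfold mcoeff; rw [if_neg (by omega)]]
        push_cast; ring
      · rintro s _ ⟨h1, h2⟩
        rw [hH] at h2
        exact hk (by exact_mod_cast h2.symm)
  | succ m IH =>
    rw [pathsW_succ, IH, IH, IH]
    have hkill : k = 0 → (if k = 0 then 0 else a * pathsW a b c m (k-1)) = 0 := fun h => by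
      rw [if_pos h]
    have hB : ∑ i ∈ Finset.range (m+2), (mcoeff m k i : R) * a^i * b^(m+1+k-2*i) * c^(i-k)
        = b * ∑ i ∈ Finset.range (m+1), wterm a b c m k i := by
      rw [Finset.sum_range_succ, mcoeff_zero_of_big (show m < m + 1 by omega)]
      push_cast
      rw [zero_mul, zero_mul, zero_mul, add_zero, Finset.mul_sum]
      apply Finset.sum_congr rfl
      intro i hi
      unfold wterm
      rcases Nat.lt_or_ge i k with h1 | h1
      · rw [mcoeff_eq_zero_left m h1]; push_cast; ring
      rcases Nat.lt_or_ge (m+k) (2*i) with h2 | h2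
      · rw [mcoeff_eq_zero_right h2]; push_cast; ring
      rw [show m+1+k-2*i = (m+k-2*i)+1 from by omega, pow_succ]
      ring
    have hC : ∑ i ∈ Finset.range (m+2), (mcoeff m (k+1) i : R) * a^i * b^(m+1+k-2*i) * c^(i-k)
        = c * ∑ i ∈ Finset.range (m+1), wterm a b c m (k+1) i := by
      rw [Finset.sum_range_succ, mcoeff_zero_of_big (show m < m + 1 by omega)]
      push_cast
      rw [zero_mul, zero_mul, zero_mul, add_zero, Finset.mul_sum]
      apply Finset.sum_congr rfl
      intro i hi
      unfold wterm
      rcases Nat.lt_or_ge i (k+1) with h1 | h1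
      · rw [mcoeff_eq_zero_left m h1]; push_cast; ring
      rcases Nat.lt_or_ge (m+(k+1)) (2*i) with h2 | h2
      · rw [mcoeff_eq_zero_right h2]; push_cast; ring
      rw [show m+(k+1)-2*i = m+1+k-2*i from by omega,
        show i-k = (i-(k+1))+1 from by omega, pow_succ]
      ring
    have hA : ∑ i ∈ Finset.range (m+2),
          (((if 1 ≤ k ∧ 1 ≤ i then mcoeff m (k-1) (i-1) else 0 : ℤ)) : R)
            * a^i * b^(m+1+k-2*i) * c^(i-k)
        = (if k = 0 then 0 else a * ∑ i ∈ Finset.range (m+1), wterm a b c m (k-1) i) := by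
      by_cases hk : k = 0
      · subst hk
        rw [if_pos rfl]
        apply Finset.sum_eq_zero
        intro i _
        rw [if_neg (by omega)]
        push_cast; ring
      · rw [if_neg hk, Finset.sum_range_succ']
        rw [show (((if 1 ≤ k ∧ 1 ≤ 0 then mcoeff m (k-1) (0-1) else 0 : ℤ)) : R)
              * a^0 * b^(m+1+k-2*0) * c^(0-k) = 0 from by
            rw [if_neg (by omega)]; push_cast; ring, add_zero, Finset.mul_sum]
        apply Finset.sum_congr rfl
        intro i hi
        rw [if_pos (show 1 ≤ k ∧ 1 ≤ i + 1 from ⟨by omega, by omega⟩)]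
        unfold wterm
        rw [show m+1+k-2*(i+1) = m+(k-1)-2*i from by omega,
          show (i+1)-k = i-(k-1) from by omega,
          show (i+1-1) = i from by omega]
        push_cast
        ring
    have expand : ∀ i : ℕ, wterm a b c (m+1) k i
        = (((if 1 ≤ k ∧ 1 ≤ i then mcoeff m (k-1) (i-1) else 0 : ℤ)) : R)
            * a^i * b^(m+1+k-2*i) * c^(i-k)
          + (mcoeff m k i : R) * a^i * b^(m+1+k-2*i) * c^(i-k)
          + (mcoeff m (k+1) i : R) * a^i * b^(m+1+k-2*i) * c^(i-k) := by
      intro i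
      unfold wterm
      rw [mcoeff_succ]
      push_cast
      ring
    rw [Finset.sum_congr rfl (fun i _ => expand i), Finset.sum_add_distrib,
      Finset.sum_add_distrib, hA, hB, hC]
    ring

lemma catalan_int (i : ℕ) :
    (catalan i : ℤ) = (Nat.choose (2*i) i : ℤ) - Nat.choose (2*i) (i+1) := by
  have h1 : (i + 1) * catalan i = Nat.centralBinom i := succ_mul_catalan_eq_centralBinom i
  have h1' : ((i:ℤ) + 1) * (catalan i : ℤ) = (Nat.choose (2*i) i : ℤ) := by
    have : Nat.centralBinom i = Nat.choose (2*i) i := rfl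
    rw [this] at h1; exact_mod_cast h1
  have h2 : Nat.choose (2*i) (i+1) * (i+1) = Nat.choose (2*i) i * (2*i - i) :=
    Nat.choose_succ_right_eq (2*i) i
  have h4 : 2*i - i = i := by omega
  rw [h4] at h2
  have h2' : ((2*i).choose (i+1) : ℤ) * ((i:ℤ)+1) = ((2*i).choose i : ℤ) * i := by exact_mod_cast h2
  have hne : ((i:ℤ) + 1) ≠ 0 := by positivity
  refine mul_left_cancel₀ hne ?_
  linear_combination h1' + h2'

/-- `P_{n,0}`, the total weight of step sequences of length `n-1` started at
height `1`, staying at height `≥ 1` for the first `n-2` steps, and ending at height `0`,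
equals the weighted Motzkin number `∑_i C(n-2, 2i) ⬝ Cat(i) ⬝ a^i b^(n-2-2i) c^(i+1)`. -/
theorem weighted_paths_ruin {R : Type*} [CommRing R] (a b c : R) (n : ℕ) (hn : 2 ≤ n) :
    (∑ s ∈ (stepSeqs (n - 1)).filter
        (fun s => (∀ i ≤ n - 2, 1 ≤ seqHeight 1 s i) ∧ seqHeight 1 s (n - 1) = 0),
      seqWeight a b c s)
      = ∑ i ∈ Finset.range ((n - 2) / 2 + 1),
          (Nat.choose (n - 2) (2 * i) : R) * (catalan i : R) *
            a ^ i * b ^ (n - 2 - 2 * i) * c ^ (i + 1) := by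
  obtain ⟨m, rfl⟩ : ∃ m, n = m + 2 := ⟨n - 2, by omega⟩
  show (∑ s ∈ (stepSeqs (m + 1)).filter
        (fun s => (∀ i ≤ m, 1 ≤ seqHeight 1 s i) ∧ seqHeight 1 s (m + 1) = 0),
      seqWeight a b c s)
      = ∑ i ∈ Finset.range (m / 2 + 1),
          (Nat.choose m (2 * i) : R) * (catalan i : R) *
            a ^ i * b ^ (m - 2 * i) * c ^ (i + 1)
  have key : (∑ s ∈ (stepSeqs (m + 1)).filter
        (fun s => (∀ i ≤ m, 1 ≤ seqHeight 1 s i) ∧ seqHeight 1 s (m + 1) = 0),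
      seqWeight a b c s) = c * pathsW a b c m 0 := by
    rw [Finset.sum_filter, sum_stepSeqs_succ]
    have hstep : ∀ v : ℤ, v = 1 ∨ v = 0 ∨ v = -1 → ∀ t : Fin m → ℤ,
        (if (∀ i ≤ m, 1 ≤ seqHeight 1 (Fin.snoc t v) i) ∧ seqHeight 1 (Fin.snoc t v) (m+1) = 0
          then seqWeight a b c (Fin.snoc t v) else 0)
        = (if ((∀ i ≤ m, 0 ≤ seqHeight 0 t i) ∧ seqHeight 0 t m = -1 - v)
          then seqWeight a b c t * (if v = 1 then a else if v = 0 then b else c) else 0) := by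
      intro v hv t
      refine if_congr ?_ (seqWeight_snoc a b c t v hv) rfl
      constructor
      · rintro ⟨h1, h2⟩
        rw [seqHeight_snoc_last, seqHeight_shift] at h2
        refine ⟨fun i hi => ?_, by omega⟩
        have := h1 i hi
        rw [seqHeight_snoc_le _ _ _ hi, seqHeight_shift] at this
        omega
      · rintro ⟨h1, h2⟩
        constructor
        · intro i hi
          rw [seqHeight_snoc_le _ _ _ hi, seqHeight_shift]
          have := h1 i hi
          omega
        · rw [seqHeight_snoc_last, seqHeight_shift]
          omega
    have step1 : ∀ t : Fin m → ℤ,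
        (if (∀ i ≤ m, 1 ≤ seqHeight 1 (Fin.snoc t (1:ℤ)) i)
            ∧ seqHeight 1 (Fin.snoc t (1:ℤ)) (m+1) = 0
          then seqWeight a b c (Fin.snoc t (1:ℤ)) else 0)
        = (if ((∀ i ≤ m, 0 ≤ seqHeight 0 t i) ∧ seqHeight 0 t m = -2)
          then seqWeight a b c t * a else 0) := by
      intro t; rw [hstep 1 (by norm_num) t]; norm_num
    have step0 : ∀ t : Fin m → ℤ,
        (if (∀ i ≤ m, 1 ≤ seqHeight 1 (Fin.snoc t (0:ℤ)) i)
            ∧ seqHeight 1 (Fin.snoc t (0:ℤ)) (m+1) = 0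
          then seqWeight a b c (Fin.snoc t (0:ℤ)) else 0)
        = (if ((∀ i ≤ m, 0 ≤ seqHeight 0 t i) ∧ seqHeight 0 t m = -1)
          then seqWeight a b c t * b else 0) := by
      intro t; rw [hstep 0 (by norm_num) t]; norm_num
    have stepm1 : ∀ t : Fin m → ℤ,
        (if (∀ i ≤ m, 1 ≤ seqHeight 1 (Fin.snoc t (-1:ℤ)) i)
            ∧ seqHeight 1 (Fin.snoc t (-1:ℤ)) (m+1) = 0
          then seqWeight a b c (Fin.snoc t (-1:ℤ)) else 0)
        = (if ((∀ i ≤ m, 0 ≤ seqHeight 0 t i) ∧ seqHeight 0 t m = 0)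
          then seqWeight a b c t * c else 0) := by
      intro t; rw [hstep (-1) (by norm_num) t]; norm_num
    have kill : ∀ (x : R) (K : ℤ), K < 0 →
        (∑ t ∈ stepSeqs m, if ((∀ i ≤ m, 0 ≤ seqHeight 0 t i) ∧ seqHeight 0 t m = K)
          then seqWeight a b c t * x else 0) = 0 := by
      intro x K hKneg
      apply Finset.sum_eq_zero
      intro t _
      rw [if_neg]
      rintro ⟨h1, h2⟩
      have := h1 m le_rfl
      omega
    have collect : (∑ t ∈ stepSeqs m,
          if ((∀ i ≤ m, 0 ≤ seqHeight 0 t i) ∧ seqHeight 0 t m = 0)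
          then seqWeight a b c t * c else 0) = c * pathsW a b c m 0 := by
      rw [pathsW, Finset.mul_sum, Finset.sum_filter]
      apply Finset.sum_congr rfl
      intro t _
      have heq : (seqHeight 0 t m = (0:ℤ)) ↔ (seqHeight 0 t m = ((0:ℕ):ℤ)) := by
        constructor <;> (intro h; omega)
      rw [if_congr (and_congr_right (fun _ => heq)) rfl rfl]
      split_ifs <;> ring
    rw [Finset.sum_congr rfl (fun t _ => by rw [step1 t, step0 t, stepm1 t])]
    rw [Finset.sum_add_distrib, Finset.sum_add_distrib, kill a (-2) (by norm_num),
      kill b (-1) (by norm_num), collect]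
    ring
  rw [key, pathsW_eq, Finset.mul_sum]
  have hterm : ∀ i : ℕ, c * wterm a b c m 0 i
      = (Nat.choose m (2*i) : R) * (catalan i : R) * a ^ i * b ^ (m - 2*i) * c ^ (i+1) := by
    intro i
    unfold wterm
    have hm : mcoeff m 0 i = (Nat.choose m (2*i)) * (catalan i : ℤ) := by
      unfold mcoeff
      rw [if_pos (by omega), catalan_int]
      norm_num
    rw [hm, show m + 0 - 2*i = m - 2*i from by omega, show i - 0 = i from by omega, pow_succ]
    push_cast
    ring
  rw [Finset.sum_congr rfl (fun i _ => hterm i)]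
  symm
  apply Finset.sum_subset
  · intro x hx
    rw [Finset.mem_range] at hx ⊢
    omega
  · intro x _ hx
    rw [Finset.mem_range, not_lt] at hx
    rw [Nat.choose_eq_zero_of_lt (by omega)]
    push_cast; ring
end

section
/- Let a, b, c be nonnegative reals with a + b + c = 1. For n ≥ 0 define v_n = ∑_{x=0}^{⌊n/2⌋} n!/(x!·x!·(n−2x)!) · a^x · b^{n−2x} · c^{x}. Then for every real t with 0 < t and t·(b + 2·√(a·c)) < 1, the series ∑_{n=0}^∞ v_n·t^n converges (HasSum) to (1/(1 − b·t)) · (1 − 4·a·c·t²/(1 − b·t)²)^{−1/2}. -/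
open Finset


lemma cb_le_four_pow (n : ℕ) : Nat.centralBinom n ≤ 4 ^ n := by
  calc Nat.centralBinom n = (2 * n).choose n := Nat.centralBinom_eq_two_mul_choose n
    _ ≤ (2 * n + 1).choose n := Nat.choose_le_choose n (by omega)
    _ ≤ 4 ^ n := Nat.choose_middle_le_pow n

lemma refl_sum (m : ℕ) :
    2 * ∑ k ∈ range (m + 1), (k : ℝ) * Nat.centralBinom k * Nat.centralBinom (m - k)
      = m * ∑ k ∈ range (m + 1), (Nat.centralBinom k : ℝ) * Nat.centralBinom (m - k) := by
  have h1 := Finset.sum_range_reflect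
    (fun k => (k : ℝ) * Nat.centralBinom k * Nat.centralBinom (m - k)) (m + 1)
  have h2 : ∑ k ∈ range (m + 1),
      ((m - k : ℕ) : ℝ) * Nat.centralBinom (m - k) * Nat.centralBinom k
      = ∑ k ∈ range (m + 1), (k : ℝ) * Nat.centralBinom k * Nat.centralBinom (m - k) := by
    rw [← h1]
    refine Finset.sum_congr rfl fun k hk => ?_
    simp only [mem_range] at hk
    have e1 : m + 1 - 1 - k = m - k := by omega
    have e2 : m - (m - k) = k := by omega
    rw [e1, e2]
  rw [two_mul, Finset.mul_sum]
  nth_rewrite 2 [← h2]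
  rw [← Finset.sum_add_distrib]
  refine Finset.sum_congr rfl fun k hk => ?_
  simp only [mem_range] at hk
  have hcast : (k : ℝ) + ((m - k : ℕ) : ℝ) = m := by
    rw [← Nat.cast_add]
    congr 1
    omega
  rw [← hcast]; ring

lemma conv_identity (n : ℕ) :
    ∑ k ∈ range (n + 1), (Nat.centralBinom k : ℝ) * Nat.centralBinom (n - k) = 4 ^ n := by
  induction n with
  | zero => simp [Nat.centralBinom]
  | succ n ih =>
    have hrec : ∀ j : ℕ, ((j : ℝ) + 1) * Nat.centralBinom (j + 1)
        = 2 * (2 * j + 1) * Nat.centralBinom j := by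
      intro j
      have := Nat.succ_mul_centralBinom_succ j
      have h2 : ((j + 1) * Nat.centralBinom (j + 1) : ℕ) = (2 * (2 * j + 1) * Nat.centralBinom j : ℕ) := this
      exact_mod_cast congrArg (Nat.cast : ℕ → ℝ) h2
    -- key: (n+1) * S_{n+1} = 2 * A' where A' = sum k * c k * c (n+1-k)
    have key : ((n : ℝ) + 1) * ∑ k ∈ range (n + 2), (Nat.centralBinom k : ℝ) * Nat.centralBinom (n + 1 - k)
        = 2 * ∑ k ∈ range (n + 2), (k : ℝ) * Nat.centralBinom k * Nat.centralBinom (n + 1 - k) := by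
      have := refl_sum (n + 1)
      push_cast at this ⊢
      linarith [this]
    -- A' = 4 * A_n + 2 * S_n
    have hA' : ∑ k ∈ range (n + 2), (k : ℝ) * Nat.centralBinom k * Nat.centralBinom (n + 1 - k)
        = ∑ j ∈ range (n + 1), (2 * (2 * (j:ℝ) + 1)) * Nat.centralBinom j * Nat.centralBinom (n - j) := by
      rw [Finset.sum_range_succ' (fun k => (k : ℝ) * Nat.centralBinom k * Nat.centralBinom (n + 1 - k)) (n + 1)]
      simp only [Nat.cast_zero, zero_mul, add_zero]
      refine Finset.sum_congr rfl fun j hj => ?_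
      have h1 : n + 1 - (j + 1) = n - j := by omega
      rw [h1]
      have := hrec j
      push_cast
      push_cast at this
      nlinarith [this]
    have hAn := refl_sum n
    have hSn' : ∑ j ∈ range (n + 1), (2 * (2 * (j:ℝ) + 1)) * Nat.centralBinom j * Nat.centralBinom (n - j)
        = 4 * ∑ j ∈ range (n + 1), (j : ℝ) * Nat.centralBinom j * Nat.centralBinom (n - j)
          + 2 * ∑ j ∈ range (n + 1), (Nat.centralBinom j : ℝ) * Nat.centralBinom (n - j) := by
      rw [Finset.mul_sum, Finset.mul_sum, ← Finset.sum_add_distrib]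
      refine Finset.sum_congr rfl fun j hj => ?_
      ring
    have hpos : ((n : ℝ) + 1) ≠ 0 := by positivity
    have : ((n : ℝ) + 1) * ∑ k ∈ range (n + 2), (Nat.centralBinom k : ℝ) * Nat.centralBinom (n + 1 - k)
        = ((n : ℝ) + 1) * (4 * 4 ^ n) := by
      rw [key, hA', hSn', ih]
      nlinarith [hAn, ih]
    have := mul_left_cancel₀ hpos this
    rw [this]; ring

lemma hasSum_centralBinom_gf {w : ℝ} (hw0 : 0 ≤ w) (hw : 4 * w < 1) :
    HasSum (fun x : ℕ => (Nat.centralBinom x : ℝ) * w ^ x)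
      ((1 - 4 * w) ^ (-(1 : ℝ) / 2)) := by
  set g : ℕ → ℝ := fun x => (Nat.centralBinom x : ℝ) * w ^ x with hg
  have hgnn : ∀ x, 0 ≤ g x := fun x => by positivity
  have hfour : |4 * w| < 1 := by rw [abs_of_nonneg (by linarith)]; exact hw
  have hsum4 : Summable fun x : ℕ => (4 * w) ^ x := summable_geometric_of_abs_lt_one hfour
  have hgle : ∀ x, g x ≤ (4 * w) ^ x := by
    intro x
    have : (Nat.centralBinom x : ℝ) ≤ 4 ^ x := by exact_mod_cast cb_le_four_pow x
    calc g x ≤ (4 : ℝ) ^ x * w ^ x := by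
          apply mul_le_mul_of_nonneg_right this (by positivity)
      _ = (4 * w) ^ x := (mul_pow 4 w x).symm
  have hgsum : Summable g := Summable.of_nonneg_of_le hgnn hgle hsum4
  -- Cauchy product
  have hprod : Summable fun p : ℕ × ℕ => g p.1 * g p.2 := by
    exact hgsum.mul_of_nonneg hgsum hgnn hgnn
  have hcauchy := Summable.tsum_mul_tsum_eq_tsum_sum_range hgsum hgsum hprod
  have hconv : ∀ n : ℕ, ∑ k ∈ range (n + 1), g k * g (n - k) = (4 * w) ^ n := by
    intro n
    have : ∑ k ∈ range (n + 1), g k * g (n - k)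
        = ∑ k ∈ range (n + 1), (Nat.centralBinom k : ℝ) * Nat.centralBinom (n - k) * w ^ n := by
      refine Finset.sum_congr rfl fun k hk => ?_
      simp only [mem_range] at hk
      have : w ^ k * w ^ (n - k) = w ^ n := by
        rw [← pow_add]; congr 1; omega
      simp only [hg]
      rw [mul_mul_mul_comm, this]
    rw [this, ← Finset.sum_mul, conv_identity n, mul_pow]
  have h4w : (0:ℝ) < 1 - 4 * w := by linarith
  have htsum4 : ∑' n : ℕ, (4 * w) ^ n = (1 - 4 * w)⁻¹ := tsum_geometric_of_abs_lt_one hfour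
  have hsq : (∑' n, g n) * (∑' n, g n) = (1 - 4 * w)⁻¹ := by
    rw [hcauchy, ← htsum4]
    exact tsum_congr hconv
  have hnn : 0 ≤ ∑' n, g n := tsum_nonneg hgnn
  have hval : ∑' n, g n = (1 - 4 * w) ^ (-(1 : ℝ) / 2) := by
    have h1 : ∑' n, g n = Real.sqrt ((1 - 4 * w)⁻¹) := by
      rw [← hsq, Real.sqrt_mul_self hnn]
    have h2 : (1 - 4 * w : ℝ) ^ (-(1 : ℝ) / 2) = ((1 - 4 * w) ^ ((1 : ℝ) / 2))⁻¹ := by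
      rw [neg_div, Real.rpow_neg h4w.le]
    rw [h1, h2, ← Real.sqrt_eq_rpow, Real.sqrt_inv]
  rw [← hval]
  exact hgsum.hasSum


lemma multinom_eq (x m : ℕ) :
    ((2 * x + m).factorial : ℝ) / ((x.factorial : ℝ) * x.factorial * m.factorial)
      = ((m + 2 * x).choose (2 * x) : ℝ) * ((2 * x).choose x) := by
  have h1 : ((m + 2 * x).choose (2 * x)) * (2 * x).factorial * m.factorial
      = (m + 2 * x).factorial := by
    have := Nat.choose_mul_factorial_mul_factorial (show 2 * x ≤ m + 2 * x by omega)
    have e : m + 2 * x - 2 * x = m := by omega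
    rwa [e] at this
  have h2 : ((2 * x).choose x) * x.factorial * x.factorial = (2 * x).factorial := by
    have := Nat.choose_mul_factorial_mul_factorial (show x ≤ 2 * x by omega)
    have e : 2 * x - x = x := by omega
    rwa [e] at this
  have hx : (0:ℝ) < (x.factorial : ℝ) := by exact_mod_cast x.factorial_pos
  have hm : (0:ℝ) < (m.factorial : ℝ) := by exact_mod_cast m.factorial_pos
  have e : 2 * x + m = m + 2 * x := by omega
  rw [e, div_eq_iff (by positivity)]
  have h1' : (((m + 2 * x).choose (2 * x) : ℝ)) * (2 * x).factorial * m.factorial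
      = ((m + 2 * x).factorial : ℝ) := by exact_mod_cast h1
  have h2' : (((2 * x).choose x : ℝ)) * x.factorial * x.factorial
      = ((2 * x).factorial : ℝ) := by exact_mod_cast h2
  rw [← h1', ← h2']
  ring

def walkEquiv : (ℕ × ℕ) ≃ (Σ n : ℕ, Fin (n / 2 + 1)) where
  toFun p := ⟨2 * p.1 + p.2, ⟨p.1, by omega⟩⟩
  invFun q := (q.2.1, q.1 - 2 * q.2.1)
  left_inv p := by
    refine Prod.ext rfl ?_
    simp only
    omega
  right_inv q := by
    obtain ⟨n, x⟩ := q
    have hx := x.2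
    have h : 2 * x.1 + (n - 2 * x.1) = n := by omega
    refine Sigma.ext h ?_
    rw [Fin.heq_ext_iff (by simp only [h])]

set_option maxHeartbeats 1000000 in
/-- the generating function of `v_n`, the probability that an unrestricted
`(a,b,c)`-random walk started at height `0` is at height `0` after `n` steps. -/
theorem unrestricted_walk_return_gf (a b c : ℝ)
    (ha : 0 ≤ a) (hb : 0 ≤ b) (hc : 0 ≤ c) (habc : a + b + c = 1)
    (v : ℕ → ℝ)
    (hv : ∀ n, v n = ∑ x ∈ Finset.range (n / 2 + 1),
      (n.factorial : ℝ) / ((x.factorial : ℝ) * (x.factorial : ℝ) *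
          ((n - 2 * x).factorial : ℝ)) *
        a ^ x * b ^ (n - 2 * x) * c ^ x)
    (t : ℝ) (ht : 0 < t) (ht1 : t * (b + 2 * Real.sqrt (a * c)) < 1) :
    HasSum (fun n : ℕ => v n * t ^ n)
      ((1 / (1 - b * t)) *
        (1 - 4 * a * c * t ^ 2 / (1 - b * t) ^ 2) ^ (-(1 : ℝ) / 2)) := by
  have hsqrt := Real.sqrt_nonneg (a * c)
  have hsq : Real.sqrt (a * c) ^ 2 = a * c := Real.sq_sqrt (mul_nonneg ha hc)
  set s : ℝ := b * t with hs_def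
  set u : ℝ := a * c * t ^ 2 with hu_def
  have hs0 : 0 ≤ s := mul_nonneg hb ht.le
  have hs1 : s < 1 := by nlinarith
  have h1s : (0:ℝ) < 1 - s := by linarith
  have hu0 : 0 ≤ u := by positivity
  have h2ts : 2 * t * Real.sqrt (a * c) < 1 - s := by nlinarith
  have h4u : 4 * u < (1 - s) ^ 2 := by
    have hlt := mul_self_lt_mul_self (by positivity : (0:ℝ) ≤ 2 * t * Real.sqrt (a * c)) h2ts
    have e : (2 * t * Real.sqrt (a * c)) * (2 * t * Real.sqrt (a * c)) = 4 * u := by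
      rw [hu_def]; linear_combination (4 * t ^ 2) * hsq
    nlinarith [hlt, e]
  set w : ℝ := u / (1 - s) ^ 2 with hw_def
  have hw0 : 0 ≤ w := div_nonneg hu0 (by positivity)
  have hw4 : 4 * w < 1 := by
    rw [hw_def, mul_div_assoc']
    exact (div_lt_one (by positivity)).2 h4u
  set F : ℕ × ℕ → ℝ := fun p =>
    ((2 * p.1 + p.2).factorial : ℝ) /
        ((p.1.factorial : ℝ) * (p.1.factorial : ℝ) * (p.2.factorial : ℝ)) *
      u ^ p.1 * s ^ p.2 with hF_def
  set g : ℕ → ℝ := fun x =>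
    (Nat.centralBinom x : ℝ) * u ^ x * (1 / (1 - s) ^ (2 * x + 1)) with hg_def
  have hs_norm : ‖s‖ < 1 := by rw [Real.norm_eq_abs, abs_of_nonneg hs0]; exact hs1
  -- inner sums
  have hA : ∀ x : ℕ, HasSum (fun m => F (x, m)) (g x) := by
    intro x
    have h := (hasSum_choose_mul_geometric_of_norm_lt_one (2 * x) hs_norm).mul_left
      ((Nat.centralBinom x : ℝ) * u ^ x)
    refine h.congr_fun fun m => ?_
    simp only [hF_def]
    rw [multinom_eq x m, Nat.centralBinom_eq_two_mul_choose]
    ring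
  -- outer sum
  set T : ℝ := (1 / (1 - s)) * (1 - 4 * w) ^ (-(1 : ℝ) / 2) with hT_def
  have hB : HasSum g T := by
    have h := (hasSum_centralBinom_gf hw0 hw4).mul_left (1 / (1 - s))
    refine h.congr_fun fun x => ?_
    simp only [hg_def]
    rw [hw_def, div_pow, ← pow_mul, pow_succ]
    simp only [one_div, div_eq_mul_inv, mul_inv]
    ring
  have hFnn : ∀ p : ℕ × ℕ, 0 ≤ F p := by
    intro p
    apply mul_nonneg (mul_nonneg _ (pow_nonneg hu0 _)) (pow_nonneg hs0 _)
    positivity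
  have hFsummable : Summable F :=
    (summable_prod_of_nonneg hFnn).2
      ⟨fun x => (hA x).summable, hB.summable.congr fun x => ((hA x).tsum_eq).symm⟩
  have hFhasSum : HasSum F T := by
    have : ∑' p, F p = T := by
      rw [Summable.tsum_prod' hFsummable (fun x => (hA x).summable)]
      calc ∑' x, ∑' m, F (x, m) = ∑' x, g x := tsum_congr fun x => (hA x).tsum_eq
        _ = T := hB.tsum_eq
    exact this ▸ hFsummable.hasSum
  have hSigma : HasSum (fun q : Σ n : ℕ, Fin (n / 2 + 1) => F (walkEquiv.symm q)) T :=
    (walkEquiv.symm.hasSum_iff).2 hFhasSum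
  have hfiber : ∀ n : ℕ,
      HasSum (fun x : Fin (n / 2 + 1) => F (walkEquiv.symm ⟨n, x⟩)) (v n * t ^ n) := by
    intro n
    have hfin := hasSum_fintype (fun x : Fin (n / 2 + 1) => F (walkEquiv.symm ⟨n, x⟩))
    suffices hval : ∑ x : Fin (n / 2 + 1), F (walkEquiv.symm ⟨n, x⟩) = v n * t ^ n by
      rwa [hval] at hfin
    have hre : ∀ x : Fin (n / 2 + 1), F (walkEquiv.symm ⟨n, x⟩) = F (x.1, n - 2 * x.1) :=
      fun x => rfl
    rw [hv n, Finset.sum_mul]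
    rw [show (∑ x : Fin (n / 2 + 1), F (walkEquiv.symm ⟨n, x⟩))
        = ∑ x : Fin (n / 2 + 1), F (x.1, n - 2 * x.1) from Finset.sum_congr rfl fun x _ => hre x]
    rw [Fin.sum_univ_eq_sum_range (fun i => F (i, n - 2 * i))]
    refine Finset.sum_congr rfl fun x hx => ?_
    simp only [mem_range] at hx
    have h2x : 2 * x + (n - 2 * x) = n := by omega
    simp only [hF_def]
    rw [h2x, hu_def, hs_def]
    have e1 : (a * c * t ^ 2) ^ x * (b * t) ^ (n - 2 * x)
        = a ^ x * b ^ (n - 2 * x) * c ^ x * t ^ n := by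
      have ht2 : ((t : ℝ) ^ 2) ^ x * t ^ (n - 2 * x) = t ^ n := by
        rw [← pow_mul, ← pow_add, h2x]
      calc (a * c * t ^ 2) ^ x * (b * t) ^ (n - 2 * x)
          = (a ^ x * c ^ x * (t ^ 2) ^ x) * (b ^ (n - 2 * x) * t ^ (n - 2 * x)) := by
            rw [mul_pow, mul_pow, mul_pow]
        _ = a ^ x * b ^ (n - 2 * x) * c ^ x * ((t ^ 2) ^ x * t ^ (n - 2 * x)) := by ring
        _ = _ := by rw [ht2]
    calc (n.factorial : ℝ) / (x.factorial * x.factorial * (n - 2 * x).factorial) *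
          (a * c * t ^ 2) ^ x * (b * t) ^ (n - 2 * x)
        = (n.factorial : ℝ) / (x.factorial * x.factorial * (n - 2 * x).factorial) *
          ((a * c * t ^ 2) ^ x * (b * t) ^ (n - 2 * x)) := by ring
      _ = _ := by rw [e1, ← h2x]; ring
  have hfinal := hSigma.sigma hfiber
  have hTeq : T = (1 / (1 - b * t)) *
      (1 - 4 * a * c * t ^ 2 / (1 - b * t) ^ 2) ^ (-(1 : ℝ) / 2) := by
    rw [hT_def]
    congr 2
    rw [hw_def, hu_def, hs_def]
    ring
  exact hTeq ▸ hfinal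
end
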